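/- Let $z(\varepsilon)$ be the solution near $-u_s(a)$ of $z + u_s(a) = (-\varepsilon z)^{1/2}\tau$ with $u_s(a)>0$. Then $\omega^{app}(\varepsilon) := 1/z(\varepsilon)$ satisfies the asymptotic expansion $\omega^{app}(\varepsilon) = -\frac{1}{u_s(a)} - \varepsilon^{1/2}\,\frac{\tau}{u_s(a)^{3/2}} + o(\varepsilon^{1/2})$ as $\varepsilon\to 0^+$. -/

import Mathlib

open Set Filter Asymptotics

lemma aux_cpow {r : ℝ} (hr : 0 < r) {x : ℂ} (hx : x ≠ 0) (s : ℂ) :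
    ((r:ℂ) * x) ^ s = (r:ℂ) ^ s * x ^ s := by
  have hr' : (r:ℂ) ≠ 0 := by exact_mod_cast hr.ne'
  rw [Complex.cpow_def_of_ne_zero (mul_ne_zero hr' hx),
    Complex.cpow_def_of_ne_zero hr', Complex.cpow_def_of_ne_zero hx,
    Complex.log_ofReal_mul hr hx, add_mul, Complex.exp_add,
    Complex.ofReal_log hr.le]

/-- Asymptotic expansion (4.10): if `z(ε)` solves `z + u_s(a) = (-εz)^{1/2} τ`
near `-u_s(a)`, then `ω^{app}(ε) = 1/z(ε) = -1/u_s(a) - ε^{1/2} τ/u_s(a)^{3/2} + o(ε^{1/2})`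
as `ε → 0⁺`. -/
theorem stmt10 (c : ℝ) (hc : 0 < c) (τ : ℂ) (zf : ℝ → ℂ)
    (heq : ∀ᶠ ε in nhdsWithin (0:ℝ) (Ioi 0),
      zf ε + (c:ℂ) = (-(ε:ℂ) * zf ε) ^ ((1:ℂ)/2) * τ)
    (hlim : Tendsto zf (nhdsWithin (0:ℝ) (Ioi 0)) (nhds (-(c:ℂ)))) :
    (fun ε : ℝ => 1 / zf ε
        - (-(1 / (c:ℂ)) - (Real.sqrt ε : ℂ) * τ / ((c ^ ((3:ℝ)/2) : ℝ) : ℂ)))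
      =o[nhdsWithin (0:ℝ) (Ioi 0)] (fun ε : ℝ => Real.sqrt ε) := by
  set l := nhdsWithin (0:ℝ) (Ioi 0)
  have hc' : (c:ℂ) ≠ 0 := by exact_mod_cast hc.ne'
  have hc32 : (c ^ ((3:ℝ)/2) : ℝ) ≠ 0 := (Real.rpow_pos_of_pos hc _).ne'
  have hc32' : ((c ^ ((3:ℝ)/2) : ℝ) : ℂ) ≠ 0 := by exact_mod_cast hc32
  have hzne : ∀ᶠ ε in l, zf ε ≠ 0 := hlim.eventually_ne (by simpa using hc')
  have hεpos : ∀ᶠ ε in l, (0:ℝ) < ε := self_mem_nhdsWithin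
  set g : ℝ → ℂ := fun ε =>
    (-(zf ε)) ^ ((1:ℂ)/2) * τ / ((c:ℂ) * zf ε) + τ / ((c ^ ((3:ℝ)/2) : ℝ) : ℂ)
    with hg
  -- eventual equality
  have hEq : ∀ᶠ ε in l,
      1 / zf ε - (-(1 / (c:ℂ)) - (Real.sqrt ε : ℂ) * τ / ((c ^ ((3:ℝ)/2) : ℝ) : ℂ))
        = ((Real.sqrt ε : ℝ) : ℂ) * g ε := by
    filter_upwards [heq, hzne, hεpos] with ε he hz hε
    have hsplit : (-(ε:ℂ) * zf ε) ^ ((1:ℂ)/2)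
        = ((Real.sqrt ε : ℝ) : ℂ) * (-(zf ε)) ^ ((1:ℂ)/2) := by
      have h1 : -(ε:ℂ) * zf ε = (ε:ℂ) * (-(zf ε)) := by ring
      rw [h1, aux_cpow hε (neg_ne_zero.2 hz)]
      congr 1
      rw [show ((Real.sqrt ε : ℝ) : ℂ) = ((ε ^ ((1:ℝ)/2) : ℝ) : ℂ) by
          norm_num [Real.sqrt_eq_rpow],
        Complex.ofReal_cpow hε.le]
      norm_num
    rw [hg]
    have h1z : 1 / zf ε + 1 / (c:ℂ) = (zf ε + (c:ℂ)) / ((c:ℂ) * zf ε) := by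
      field_simp; ring
    have : 1 / zf ε - (-(1 / (c:ℂ)) - (Real.sqrt ε : ℂ) * τ / ((c ^ ((3:ℝ)/2) : ℝ) : ℂ))
        = (zf ε + (c:ℂ)) / ((c:ℂ) * zf ε) + (Real.sqrt ε : ℂ) * τ / ((c ^ ((3:ℝ)/2) : ℝ) : ℂ) := by
      rw [← h1z]; ring
    rw [this, he, hsplit]
    field_simp
  -- g tends to 0
  have hgto : Tendsto g l (nhds 0) := by
    have hcont : ContinuousAt (fun w : ℂ => w ^ ((1:ℂ)/2)) (c:ℂ) := by
      exact continuousAt_cpow_const (Complex.mem_slitPlane_iff.mpr (Or.inl (by simpa using hc)))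
    have hnz : Tendsto (fun ε => -(zf ε)) l (nhds (c:ℂ)) := by
      simpa using hlim.neg
    have h1 : Tendsto (fun ε => (-(zf ε)) ^ ((1:ℂ)/2)) l (nhds ((c:ℂ) ^ ((1:ℂ)/2))) :=
      hcont.tendsto.comp hnz
    have h2 : Tendsto g l (nhds
        ((c:ℂ) ^ ((1:ℂ)/2) * τ / ((c:ℂ) * -(c:ℂ)) + τ / ((c ^ ((3:ℝ)/2) : ℝ) : ℂ))) := by
      exact ((h1.mul tendsto_const_nhds).div
        (tendsto_const_nhds.mul hlim) (by simpa using mul_ne_zero hc' hc')).add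
        tendsto_const_nhds
    convert h2 using 2
    have hcs : (c:ℂ) ^ ((1:ℂ)/2) = ((Real.sqrt c : ℝ) : ℂ) := by
      rw [show ((Real.sqrt c : ℝ) : ℂ) = ((c ^ ((1:ℝ)/2) : ℝ) : ℂ) by
          norm_num [Real.sqrt_eq_rpow],
        Complex.ofReal_cpow hc.le]
      norm_num
    have hc32eq : (c ^ ((3:ℝ)/2) : ℝ) = c * Real.sqrt c := by
      rw [Real.sqrt_eq_rpow, ← Real.rpow_one_add' hc.le (by norm_num)]
      norm_num
    rw [hcs, hc32eq]
    have hsc : (0:ℝ) < Real.sqrt c := Real.sqrt_pos.2 hc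
    have hsc' : ((Real.sqrt c : ℝ) : ℂ) ≠ 0 := by exact_mod_cast hsc.ne'
    have hcc : ((c:ℝ):ℂ) * ((Real.sqrt c : ℝ):ℂ) * ((Real.sqrt c : ℝ):ℂ) = (c:ℂ) * (c:ℂ) := by
      rw [mul_assoc]
      congr 1
      exact_mod_cast congrArg (Complex.ofReal) (Real.mul_self_sqrt hc.le)
    have hss : ((Real.sqrt c : ℝ) : ℂ) * ((Real.sqrt c : ℝ) : ℂ) = (c:ℂ) := by
      rw [← Complex.ofReal_mul, Real.mul_self_sqrt hc.le]
    push_cast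
    field_simp
    linear_combination τ * hss
  -- assemble
  have key : (fun ε => ((Real.sqrt ε : ℝ) : ℂ) * g ε) =o[l] (fun ε => Real.sqrt ε) := by
    have h1 : (fun ε => ((Real.sqrt ε : ℝ) : ℂ)) =O[l] (fun ε => ((Real.sqrt ε : ℝ) : ℂ)) :=
      isBigO_refl _ _
    have h2 : g =o[l] (fun _ => (1:ℂ)) := (isLittleO_one_iff ℂ).mpr hgto
    have key0 : (fun ε => ((Real.sqrt ε : ℝ) : ℂ) * g ε) =o[l]
        (fun ε => ((Real.sqrt ε : ℝ) : ℂ)) := by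
      simpa using h1.mul_isLittleO h2
    have h3 : (fun ε => ((Real.sqrt ε : ℝ) : ℂ)) =O[l] (fun ε : ℝ => Real.sqrt ε) := by
      apply isBigO_of_le
      intro x
      simp [Complex.norm_real]
    exact key0.trans_isBigO h3
  exact key.congr' (hEq.mono fun ε h => h.symm) EventuallyEq.rfl
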